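/- The one-parameter family of Lie-Yamaguti algebra structures 𝓛₁₉^α (α ∈ ℂ) on ℂ⁴, where 𝓛₁₉^α is given by [e₁,e₂]=e₄, [e₁,e₃]=e₄, [e₂,e₃]=e₄, [e₃,e₁,e₂]=e₄, [e₂,e₃,e₁]=α e₄, [e₁,e₂,e₃]=−(1+α)e₄, degenerates (as a parametric family) to the structure 𝓛₁₅ given by [e₁,e₂]=e₄, [e₁,e₃]=e₄, [e₂,e₃,e₁]=e₄, [e₃,e₁,e₂]=e₄, [e₂,e₃,e₂]=e₄, [e₂,e₁,e₃]=2e₄. -/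

import Mathlib

open Filter Matrix Topology

/-- ℂ⁴ -/
abbrev V4 : Type := Fin 4 → ℂ

/-- GL₄(ℂ) -/
abbrev GL4 := Matrix.GeneralLinearGroup (Fin 4) ℂ

/-- structure constants of a bilinear map on ℂ⁴: `μ i j` is the value on `(eᵢ, eⱼ)`. -/
abbrev Bil4 := Fin 4 → Fin 4 → V4

/-- structure constants of a trilinear map on ℂ⁴. -/
abbrev Tril4 := Fin 4 → Fin 4 → Fin 4 → V4

/-- standard basis vectors -/
noncomputable def e4 (k : Fin 4) : V4 := Pi.single k (1 : ℂ)

/-- action of `g ∈ GL₄(ℂ)` on a bilinear map: `(g·μ)(x,y) = g μ(g⁻¹x, g⁻¹y)`,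
in structure constants. -/
noncomputable def actBil (g : GL4) (μ : Bil4) : Bil4 := fun i j =>
  (g : Matrix (Fin 4) (Fin 4) ℂ).mulVec
    (∑ p, ∑ q,
      (((g⁻¹ : GL4) : Matrix (Fin 4) (Fin 4) ℂ) p i *
       ((g⁻¹ : GL4) : Matrix (Fin 4) (Fin 4) ℂ) q j) • μ p q)

/-- action of `g ∈ GL₄(ℂ)` on a trilinear map:
`(g·τ)(x,y,z) = g τ(g⁻¹x, g⁻¹y, g⁻¹z)`, in structure constants. -/
noncomputable def actTril (g : GL4) (τ : Tril4) : Tril4 := fun i j k =>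
  (g : Matrix (Fin 4) (Fin 4) ℂ).mulVec
    (∑ p, ∑ q, ∑ r,
      (((g⁻¹ : GL4) : Matrix (Fin 4) (Fin 4) ℂ) p i *
       ((g⁻¹ : GL4) : Matrix (Fin 4) (Fin 4) ℂ) q j *
       ((g⁻¹ : GL4) : Matrix (Fin 4) (Fin 4) ℂ) r k) • τ p q r)

/-- the parametric family `(μ_α, τ_α)` degenerates to `(lam,sig)`: there are maps
`f : ℂ∖{0} → ℂ` and `g : ℂ∖{0} → GL₄(ℂ)` with `g(t)·μ_{f(t)} → lam`
and `g(t)·τ_{f(t)} → sig` as `t → 0`. -/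
def DegeneratesFam (μ : ℂ → Bil4) (τ : ℂ → Tril4) (lam : Bil4) (sig : Tril4) : Prop :=
  ∃ f : ℂ → ℂ, ∃ g : ℂ → GL4,
    Tendsto (fun t => actBil (g t) (μ (f t))) (𝓝[≠] (0 : ℂ)) (𝓝 lam) ∧
    Tendsto (fun t => actTril (g t) (τ (f t))) (𝓝[≠] (0 : ℂ)) (𝓝 sig)

noncomputable def μL19 : Bil4 := fun i j =>
  if i = (0 : Fin 4) ∧ j = (1 : Fin 4) then e4 3
  else if i = (1 : Fin 4) ∧ j = (0 : Fin 4) then -(e4 3)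
  else if i = (0 : Fin 4) ∧ j = (2 : Fin 4) then e4 3
  else if i = (2 : Fin 4) ∧ j = (0 : Fin 4) then -(e4 3)
  else if i = (1 : Fin 4) ∧ j = (2 : Fin 4) then e4 3
  else if i = (2 : Fin 4) ∧ j = (1 : Fin 4) then -(e4 3)
  else 0

noncomputable def τL19 (α : ℂ) : Tril4 := fun i j k =>
  if i = (2 : Fin 4) ∧ j = (0 : Fin 4) ∧ k = (1 : Fin 4) then e4 3
  else if i = (0 : Fin 4) ∧ j = (2 : Fin 4) ∧ k = (1 : Fin 4) then -(e4 3)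
  else if i = (1 : Fin 4) ∧ j = (2 : Fin 4) ∧ k = (0 : Fin 4) then α • e4 3
  else if i = (2 : Fin 4) ∧ j = (1 : Fin 4) ∧ k = (0 : Fin 4) then -(α • e4 3)
  else if i = (0 : Fin 4) ∧ j = (1 : Fin 4) ∧ k = (2 : Fin 4) then (-(1 + α)) • e4 3
  else if i = (1 : Fin 4) ∧ j = (0 : Fin 4) ∧ k = (2 : Fin 4) then -((-(1 + α)) • e4 3)
  else 0

noncomputable def μL15 : Bil4 := fun i j =>
  if i = (0 : Fin 4) ∧ j = (1 : Fin 4) then e4 3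
  else if i = (1 : Fin 4) ∧ j = (0 : Fin 4) then -(e4 3)
  else if i = (0 : Fin 4) ∧ j = (2 : Fin 4) then e4 3
  else if i = (2 : Fin 4) ∧ j = (0 : Fin 4) then -(e4 3)
  else 0

noncomputable def τL15 : Tril4 := fun i j k =>
  if i = (1 : Fin 4) ∧ j = (2 : Fin 4) ∧ k = (0 : Fin 4) then e4 3
  else if i = (2 : Fin 4) ∧ j = (1 : Fin 4) ∧ k = (0 : Fin 4) then -(e4 3)
  else if i = (2 : Fin 4) ∧ j = (0 : Fin 4) ∧ k = (1 : Fin 4) then e4 3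
  else if i = (0 : Fin 4) ∧ j = (2 : Fin 4) ∧ k = (1 : Fin 4) then -(e4 3)
  else if i = (1 : Fin 4) ∧ j = (2 : Fin 4) ∧ k = (1 : Fin 4) then e4 3
  else if i = (2 : Fin 4) ∧ j = (1 : Fin 4) ∧ k = (1 : Fin 4) then -(e4 3)
  else if i = (1 : Fin 4) ∧ j = (0 : Fin 4) ∧ k = (2 : Fin 4) then (2 : ℂ) • e4 3
  else if i = (0 : Fin 4) ∧ j = (1 : Fin 4) ∧ k = (2 : Fin 4) then -((2 : ℂ) • e4 3)
  else 0

noncomputable def MgDeg (t : ℂ) : Matrix (Fin 4) (Fin 4) ℂ :=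
  !![-1/t, -1/t, 0, 0; 0, 1, 0, 0; 0, 0, 1, 0; 0, 0, 0, -1/t]

noncomputable def MhDeg (t : ℂ) : Matrix (Fin 4) (Fin 4) ℂ :=
  !![-t, -1, 0, 0; 0, 1, 0, 0; 0, 0, 1, 0; 0, 0, 0, -t]

lemma MgMhDeg (t : ℂ) (ht : t ≠ 0) : MgDeg t * MhDeg t = 1 := by
  ext i j
  fin_cases i <;> fin_cases j <;>
    simp [MgDeg, MhDeg, Matrix.mul_apply, Fin.sum_univ_four, Matrix.one_apply,
      Matrix.vecHead, Matrix.vecTail] <;> field_simp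

lemma MhMgDeg (t : ℂ) (ht : t ≠ 0) : MhDeg t * MgDeg t = 1 := by
  ext i j
  fin_cases i <;> fin_cases j <;>
    simp [MgDeg, MhDeg, Matrix.mul_apply, Fin.sum_univ_four, Matrix.one_apply,
      Matrix.vecHead, Matrix.vecTail] <;> field_simp <;> ring

noncomputable def gDeg (t : ℂ) : GL4 :=
  if ht : t = 0 then 1 else ⟨MgDeg t, MhDeg t, MgMhDeg t ht, MhMgDeg t ht⟩

lemma gDeg_coe (t : ℂ) (ht : t ≠ 0) : (gDeg t : Matrix (Fin 4) (Fin 4) ℂ) = MgDeg t := by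
  simp [gDeg, ht]

lemma gDeg_inv_coe (t : ℂ) (ht : t ≠ 0) :
    (((gDeg t)⁻¹ : GL4) : Matrix (Fin 4) (Fin 4) ℂ) = MhDeg t := by
  simp [gDeg, ht, Units.inv_mk]

lemma sum_bilDeg (h : Matrix (Fin 4) (Fin 4) ℂ) (i j : Fin 4) :
    ∑ p, ∑ q, (h p i * h q j) • μL19 p q
      = (h 0 i * h 1 j - h 1 i * h 0 j + h 0 i * h 2 j - h 2 i * h 0 j
          + h 1 i * h 2 j - h 2 i * h 1 j) • e4 3 := by
  simp [Fin.sum_univ_four, μL19]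
  module

lemma sum_trilDeg (α : ℂ) (h : Matrix (Fin 4) (Fin 4) ℂ) (i j k : Fin 4) :
    ∑ p, ∑ q, ∑ r, (h p i * h q j * h r k) • τL19 α p q r
      = (h 2 i * h 0 j * h 1 k - h 0 i * h 2 j * h 1 k
          + α * (h 1 i * h 2 j * h 0 k) - α * (h 2 i * h 1 j * h 0 k)
          - (1 + α) * (h 0 i * h 1 j * h 2 k) + (1 + α) * (h 1 i * h 0 j * h 2 k)) • e4 3 := by
  simp [Fin.sum_univ_four, τL19]
  module

lemma mulVec_e4Deg (t : ℂ) : (MgDeg t).mulVec (e4 3) = (-1/t) • e4 3 := by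
  funext k
  fin_cases k <;>
    simp [MgDeg, e4, Matrix.mulVec, dotProduct, Fin.sum_univ_four,
      Pi.single_apply, Matrix.vecHead, Matrix.vecTail]

/-- auxiliary perturbation term -/
noncomputable def GτDeg : Tril4 := fun i j k =>
  if i = (1 : Fin 4) ∧ j = (2 : Fin 4) ∧ k = (0 : Fin 4) then e4 3
  else if i = (2 : Fin 4) ∧ j = (1 : Fin 4) ∧ k = (0 : Fin 4) then -(e4 3)
  else if i = (1 : Fin 4) ∧ j = (0 : Fin 4) ∧ k = (2 : Fin 4) then e4 3
  else if i = (0 : Fin 4) ∧ j = (1 : Fin 4) ∧ k = (2 : Fin 4) then -(e4 3)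
  else 0

lemma bil_eqDeg (t : ℂ) (ht : t ≠ 0) : actBil (gDeg t) μL19 = μL15 := by
  funext i j
  rw [show actBil (gDeg t) μL19 i j
      = (gDeg t : Matrix (Fin 4) (Fin 4) ℂ).mulVec
          (∑ p, ∑ q,
            ((((gDeg t)⁻¹ : GL4) : Matrix (Fin 4) (Fin 4) ℂ) p i *
             (((gDeg t)⁻¹ : GL4) : Matrix (Fin 4) (Fin 4) ℂ) q j) • μL19 p q) from rfl,
    gDeg_coe t ht, gDeg_inv_coe t ht, sum_bilDeg, Matrix.mulVec_smul, mulVec_e4Deg]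
  · fin_cases i <;> fin_cases j <;>
      (simp [MhDeg, μL15, Matrix.vecHead, Matrix.vecTail, smul_smul]) <;>
      (match_scalars <;> field_simp)

lemma tril_eqDeg (t : ℂ) (ht : t ≠ 0) :
    actTril (gDeg t) (τL19 (1 + t)) = τL15 + t • GτDeg := by
  funext i j k
  rw [show actTril (gDeg t) (τL19 (1 + t)) i j k
      = (gDeg t : Matrix (Fin 4) (Fin 4) ℂ).mulVec
          (∑ p, ∑ q, ∑ r,
            ((((gDeg t)⁻¹ : GL4) : Matrix (Fin 4) (Fin 4) ℂ) p i *
             (((gDeg t)⁻¹ : GL4) : Matrix (Fin 4) (Fin 4) ℂ) q j *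
             (((gDeg t)⁻¹ : GL4) : Matrix (Fin 4) (Fin 4) ℂ) r k) • τL19 (1 + t) p q r) from rfl,
    gDeg_coe t ht, gDeg_inv_coe t ht, sum_trilDeg, Matrix.mulVec_smul, mulVec_e4Deg]
  · show _ = τL15 i j k + t • GτDeg i j k
    fin_cases i <;> fin_cases j <;> fin_cases k <;>
      (simp [MhDeg, τL15, GτDeg, Matrix.vecHead, Matrix.vecTail, smul_smul]) <;>
      (first | (match_scalars <;> field_simp <;> ring) | exact Or.inl (Or.inl (by ring)))

/-- the family 𝓛₁₉^α degenerates to 𝓛₁₅. -/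
theorem stmt3 : DegeneratesFam (fun _ => μL19) τL19 μL15 τL15 := by
  refine ⟨fun t => 1 + t, gDeg, ?_, ?_⟩
  · have h1 : (fun t => actBil (gDeg t) μL19) =ᶠ[𝓝[≠] (0:ℂ)] fun _ => μL15 := by
      filter_upwards [self_mem_nhdsWithin] with t ht using bil_eqDeg t ht
    rw [tendsto_congr' h1]
    exact tendsto_const_nhds
  · have h2 : (fun t => actTril (gDeg t) (τL19 (1 + t))) =ᶠ[𝓝[≠] (0:ℂ)]
        fun t => τL15 + t • GτDeg := by
      filter_upwards [self_mem_nhdsWithin] with t ht using tril_eqDeg t ht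
    rw [tendsto_congr' h2]
    have : Tendsto (fun t : ℂ => τL15 + t • GτDeg) (𝓝 0) (𝓝 (τL15 + (0:ℂ) • GτDeg)) :=
      tendsto_const_nhds.add (tendsto_id.smul tendsto_const_nhds)
    simpa using this.mono_left nhdsWithin_le_nhds
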